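/- For k ≥ 1 and m ≥ 1, the weight of permutations of S_m in which the single-threshold strategy with threshold k makes no selection equals T₀(m,k) = (θ^{m−1} + θ^{m−2} + … + θ^{m−k}) · (P_{m−1})! = θ^{m−k} · P_k · (P_{m−1})!, and T₀(m,0) = 0. -/

import Mathlib

open Finset

/-- Number of inversions (Kendall tau statistic) of a permutation. -/
def inversions {N : ℕ} (π : Equiv.Perm (Fin N)) : ℕ :=
  (Finset.univ.filter (fun x : Fin N × Fin N => x.1 < x.2 ∧ π x.2 < π x.1)).card

/-- `P_k(θ) = 1 + θ + … + θ^(k-1)`. -/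
def mallowsP (θ : ℝ) (k : ℕ) : ℝ := ∑ i ∈ Finset.range k, θ ^ i

/-- `(P_k)! = P_k · P_(k-1) · … · P_1`. -/
def mallowsPFact (θ : ℝ) (k : ℕ) : ℝ := ∏ j ∈ Finset.range k, mallowsP θ (j + 1)

/-- Positions (0-indexed) selected by the multi-threshold strategy: for each
threshold `k` in the list, the next selection is at the first position `p` with
`p ≥ k` (i.e. the first `k` candidates are rejected), `p ≥ lo` (after the previous
selection), and `p` a left-to-right maximum. -/
def selList {N : ℕ} (π : Equiv.Perm (Fin N)) : List ℕ → ℕ → List (Fin N)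
  | [], _ => []
  | k :: ks, lo =>
    let s : Finset (Fin N) := Finset.univ.filter
      (fun p => max k lo ≤ (p : ℕ) ∧ ∀ q : Fin N, q < p → π q < π p)
    if h : s.Nonempty then s.min' h :: selList π ks ((s.min' h : ℕ) + 1) else []

/-- The strategy wins on `π` if the position holding the largest value is selected. -/
def winnable {N : ℕ} (π : Equiv.Perm (Fin N)) (ks : List ℕ) : Prop :=
  ∃ p ∈ selList π ks 0, ∀ q : Fin N, π q ≤ π p

instance {N : ℕ} (π : Equiv.Perm (Fin N)) (ks : List ℕ) : Decidable (winnable π ks) :=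
  inferInstanceAs (Decidable (∃ p ∈ selList π ks 0, ∀ q : Fin N, π q ≤ π p))

/-- `W(N, k₁, …, k_s) = Σ_(winnable π ∈ S_N) θ^(c(π))`. -/
def winW (θ : ℝ) (N : ℕ) (ks : List ℕ) : ℝ :=
  ∑ π : Equiv.Perm (Fin N), if winnable π ks then θ ^ inversions π else 0

/-- `T_{≤j}(m, k₁, …, k_r)`: weight of permutations of `S_m` on which the strategy
makes at most `j` selections (with `j : ℤ`, so `T_{≤-1} = 0`). -/
def Tle (θ : ℝ) (m : ℕ) (ks : List ℕ) (j : ℤ) : ℝ :=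
  ∑ π : Equiv.Perm (Fin m),
    if ((selList π ks 0).length : ℤ) ≤ j then θ ^ inversions π else 0

/-- `T_j(m, k₁, …, k_r)`: weight of permutations of `S_m` on which the strategy
makes exactly `j` selections. -/
def Texact (θ : ℝ) (m : ℕ) (ks : List ℕ) (j : ℕ) : ℝ :=
  ∑ π : Equiv.Perm (Fin m),
    if (selList π ks 0).length = j then θ ^ inversions π else 0

lemma swap_adj_lt {N : ℕ} (a b x y : Fin N) (hab : (a:ℕ)+1 = b) (hxy : x < y)
    (hne : ¬(x = a ∧ y = b)) : Equiv.swap a b x < Equiv.swap a b y := by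
  have hv : (x:ℕ) < y := hxy
  rw [Fin.lt_def]
  rcases eq_or_ne x a with rfl | hxa
  · rcases eq_or_ne y b with rfl | hyb
    · exact absurd ⟨rfl, rfl⟩ hne
    · have hyv : (y:ℕ) ≠ b := fun h => hyb (Fin.ext h)
      have hya : y ≠ x := by intro h; rw [h] at hv; omega
      rw [Equiv.swap_apply_left, Equiv.swap_apply_of_ne_of_ne hya hyb]
      omega
  · rcases eq_or_ne x b with rfl | hxb
    · have hbv : (x:ℕ) < (y:ℕ) := hv
      have hya : y ≠ a := by intro h; rw [h] at hv; omega
      have hyb : y ≠ x := by intro h; rw [h] at hv; omega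
      rw [Equiv.swap_apply_right, Equiv.swap_apply_of_ne_of_ne hya hyb]
      omega
    · rcases eq_or_ne y a with rfl | hya
      · rw [Equiv.swap_apply_of_ne_of_ne hxa hxb, Equiv.swap_apply_left]
        omega
      · rcases eq_or_ne y b with rfl | hyb
        · rw [Equiv.swap_apply_of_ne_of_ne hxa hxb, Equiv.swap_apply_right]
          have : (x:ℕ) ≠ a := fun h => hxa (Fin.ext h)
          omega
        · rw [Equiv.swap_apply_of_ne_of_ne hxa hxb, Equiv.swap_apply_of_ne_of_ne hya hyb]
          exact hv

lemma inversions_mul_swap_adj {N : ℕ} (π : Equiv.Perm (Fin N)) (a b : Fin N)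
    (hab : (a:ℕ)+1 = b) (h : π a < π b) :
    inversions (π * Equiv.swap a b) = inversions π + 1 := by
  classical
  set s := Equiv.swap a b with hs
  have hsa : s a = b := Equiv.swap_apply_left a b
  have hsb : s b = a := Equiv.swap_apply_right a b
  have hss : ∀ x, s (s x) = x := fun x => Equiv.swap_apply_self a b x
  have hab' : a < b := by rw [Fin.lt_def]; omega
  set A := univ.filter (fun x : Fin N × Fin N => x.1 < x.2 ∧ (π * s) x.2 < (π * s) x.1) with hA
  set B := univ.filter (fun x : Fin N × Fin N => x.1 < x.2 ∧ π x.2 < π x.1) with hB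
  have habA : (a, b) ∈ A := by
    simp only [hA, Finset.mem_filter, Finset.mem_univ, true_and, Equiv.Perm.mul_apply]
    exact Finset.mem_filter.2 ⟨Finset.mem_univ _, hab', by simpa [hsb, hsa] using h⟩
  have hcard : (A.erase (a,b)).card = B.card := by
    apply Finset.card_bij' (fun x _ => (s x.1, s x.2)) (fun x _ => (s x.1, s x.2))
    · intro x hx
      rw [Finset.mem_erase] at hx
      obtain ⟨hne, hx⟩ := hx
      simp only [hA, Finset.mem_filter, Finset.mem_univ, true_and, Equiv.Perm.mul_apply] at hx
      replace hx := (Finset.mem_filter.1 hx).2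
      simp only [hB, Finset.mem_filter, Finset.mem_univ, true_and]
      refine ⟨swap_adj_lt a b _ _ hab hx.1 ?_, hx.2⟩
      intro ⟨h1, h2⟩
      exact hne (Prod.ext h1 h2)
    · intro y hy
      simp only [hB, Finset.mem_filter, Finset.mem_univ, true_and] at hy
      have hyne : ¬(y.1 = a ∧ y.2 = b) := by
        rintro ⟨h1, h2⟩
        rw [h1, h2] at hy
        exact absurd h (not_lt.2 hy.2.le)
      rw [Finset.mem_erase]
      constructor
      · intro hcon
        have h1 : s y.1 = a := congrArg Prod.fst hcon
        have h2 : s y.2 = b := congrArg Prod.snd hcon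
        have : y.1 = b := by rw [← hss y.1, h1, hsa]
        have : y.2 = a := by rw [← hss y.2, h2, hsb]
        have e1 : y.1 = b := by rw [← hss y.1, h1, hsa]
        have e2 : y.2 = a := by rw [← hss y.2, h2, hsb]
        have := hy.1
        rw [e1, e2, Fin.lt_def] at this
        omega
      · simp only [hA, Finset.mem_filter, Finset.mem_univ, true_and, Equiv.Perm.mul_apply,
          hss]
        exact Finset.mem_filter.2 ⟨Finset.mem_univ _, swap_adj_lt a b _ _ hab hy.1 hyne, by simpa only [hss] using hy.2⟩
    · intro x _; simp [hss]
    · intro y _; simp [hss]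
  have : A.card = (A.erase (a,b)).card + 1 := by
    rw [Finset.card_erase_of_mem habA]
    have : 1 ≤ A.card := Finset.card_pos.2 ⟨_, habA⟩
    omega
  show A.card = B.card + 1
  omega

def extFun {n : ℕ} (σ : Equiv.Perm (Fin n)) : Fin (n+1) → Fin (n+1) :=
  Fin.lastCases (Fin.last n) (fun i => (σ i).castSucc)

@[simp] lemma extFun_last {n : ℕ} (σ : Equiv.Perm (Fin n)) :
    extFun σ (Fin.last n) = Fin.last n := by
  simp [extFun]

@[simp] lemma extFun_castSucc {n : ℕ} (σ : Equiv.Perm (Fin n)) (i : Fin n) :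
    extFun σ (Fin.castSucc i) = Fin.castSucc (σ i) := by
  simp [extFun]

def extPerm {n : ℕ} (σ : Equiv.Perm (Fin n)) : Equiv.Perm (Fin (n+1)) where
  toFun := extFun σ
  invFun := extFun σ.symm
  left_inv := by
    intro p
    induction p using Fin.lastCases with
    | last => simp
    | cast i => simp
  right_inv := by
    intro p
    induction p using Fin.lastCases with
    | last => simp
    | cast i => simp

@[simp] lemma extPerm_last {n : ℕ} (σ : Equiv.Perm (Fin n)) :
    extPerm σ (Fin.last n) = Fin.last n := extFun_last σ

@[simp] lemma extPerm_castSucc {n : ℕ} (σ : Equiv.Perm (Fin n)) (i : Fin n) :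
    extPerm σ (Fin.castSucc i) = Fin.castSucc (σ i) := extFun_castSucc σ i

lemma mem_ne_last {n : ℕ} (σ : Equiv.Perm (Fin n)) (y : Fin (n+1) × Fin (n+1))
    (hy : y ∈ Finset.univ.filter
      (fun x : Fin (n+1) × Fin (n+1) => x.1 < x.2 ∧ (extPerm σ) x.2 < (extPerm σ) x.1)) :
    y.1 ≠ Fin.last n ∧ y.2 ≠ Fin.last n := by
  rw [Finset.mem_filter] at hy
  have h2 : y.2 ≠ Fin.last n := by
    intro he
    rw [he, extPerm_last] at hy
    exact absurd hy.2.2 (not_lt.2 (Fin.le_last _))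
  exact ⟨Fin.ne_last_of_lt hy.2.1, h2⟩

lemma inversions_extPerm {n : ℕ} (σ : Equiv.Perm (Fin n)) :
    inversions (extPerm σ) = inversions σ := by
  classical
  unfold inversions
  symm
  refine Finset.card_bij'
    (fun (x : Fin n × Fin n) _ => ((Fin.castSucc x.1, Fin.castSucc x.2) : Fin (n+1) × Fin (n+1)))
    (fun (y : Fin (n+1) × Fin (n+1)) hy =>
      (y.1.castPred (mem_ne_last σ y hy).1, y.2.castPred (mem_ne_last σ y hy).2))
    ?_ ?_ ?_ ?_
  · intro x hx
    rw [Finset.mem_filter] at hx ⊢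
    refine ⟨Finset.mem_univ _, ?_, ?_⟩
    · exact Fin.castSucc_lt_castSucc_iff.2 hx.2.1
    · rw [extPerm_castSucc, extPerm_castSucc]
      exact Fin.castSucc_lt_castSucc_iff.2 hx.2.2
  · intro y hy
    have hy' := (Finset.mem_filter.mp hy).2
    have e1 : Fin.castSucc (y.1.castPred (mem_ne_last σ y hy).1) = y.1 :=
      Fin.castSucc_castPred _ _
    have e2 : Fin.castSucc (y.2.castPred (mem_ne_last σ y hy).2) = y.2 :=
      Fin.castSucc_castPred _ _
    simp only [Finset.mem_filter, Finset.mem_univ, true_and]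
    constructor
    · rw [← Fin.castSucc_lt_castSucc_iff, e1, e2]
      exact hy'.1
    · rw [← Fin.castSucc_lt_castSucc_iff, ← extPerm_castSucc σ, ← extPerm_castSucc σ, e1, e2]
      exact hy'.2
  · intro x _
    simp
  · intro y _
    simp

noncomputable def Sw (θ : ℝ) (N : ℕ) : ℝ := ∑ π : Equiv.Perm (Fin N), θ ^ inversions π

noncomputable def Fw (θ : ℝ) (n : ℕ) (j : Fin (n+1)) : ℝ :=
  ∑ π : Equiv.Perm (Fin (n+1)), if π.symm (Fin.last n) = j then θ ^ inversions π else 0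

def resPerm {n : ℕ} (π : Equiv.Perm (Fin (n+1))) (h : π (Fin.last n) = Fin.last n) :
    Equiv.Perm (Fin n) where
  toFun i := (π i.castSucc).castPred (by
    intro he
    have : (i.castSucc : Fin (n+1)) = Fin.last n := π.injective (by rw [he, h])
    exact absurd this (Fin.ne_last_of_lt (Fin.castSucc_lt_last i)))
  invFun i := (π.symm i.castSucc).castPred (by
    intro he
    have : (i.castSucc : Fin (n+1)) = Fin.last n := by
      rw [← h, ← he, Equiv.apply_symm_apply]
    exact absurd this (Fin.ne_last_of_lt (Fin.castSucc_lt_last i)))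
  left_inv := by
    intro i
    apply Fin.castSucc_injective
    rw [Fin.castSucc_castPred, Fin.castSucc_castPred, Equiv.symm_apply_apply]
  right_inv := by
    intro i
    apply Fin.castSucc_injective
    rw [Fin.castSucc_castPred, Fin.castSucc_castPred, Equiv.apply_symm_apply]

lemma castSucc_resPerm {n : ℕ} (π : Equiv.Perm (Fin (n+1))) (h : π (Fin.last n) = Fin.last n)
    (i : Fin n) : Fin.castSucc (resPerm π h i) = π i.castSucc := by
  simp only [resPerm, Equiv.coe_fn_mk]
  rw [Fin.castSucc_castPred]

lemma resPerm_ext {n : ℕ} (σ : Equiv.Perm (Fin n)) (h : extPerm σ (Fin.last n) = Fin.last n) :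
    resPerm (extPerm σ) h = σ := by
  apply Equiv.ext
  intro i
  apply Fin.castSucc_injective
  rw [castSucc_resPerm, extPerm_castSucc]

lemma ext_resPerm {n : ℕ} (π : Equiv.Perm (Fin (n+1))) (h : π (Fin.last n) = Fin.last n) :
    extPerm (resPerm π h) = π := by
  apply Equiv.ext
  intro p
  induction p using Fin.lastCases with
  | last => rw [extPerm_last, h]
  | cast i => rw [extPerm_castSucc, castSucc_resPerm]

lemma Fw_last (θ : ℝ) (n : ℕ) : Fw θ n (Fin.last n) = Sw θ n := by
  classical
  rw [Fw, ← Finset.sum_filter, Sw]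
  have hmem : ∀ π : Equiv.Perm (Fin (n+1)),
      π ∈ Finset.univ.filter (fun π : Equiv.Perm (Fin (n+1)) => π.symm (Fin.last n) = Fin.last n)
      → π (Fin.last n) = Fin.last n := by
    intro π hπ
    rw [Finset.mem_filter] at hπ
    conv_lhs => rw [← hπ.2]
    exact π.apply_symm_apply _
  refine Finset.sum_bij' (fun π hπ => resPerm π (hmem π hπ)) (fun σ _ => extPerm σ)
    ?_ ?_ ?_ ?_ ?_
  · intro π hπ
    exact Finset.mem_univ _
  · intro σ _
    rw [Finset.mem_filter]
    refine ⟨Finset.mem_univ _, ?_⟩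
    apply_fun (extPerm σ)
    rw [Equiv.apply_symm_apply, extPerm_last]
  · intro π hπ
    exact ext_resPerm π (hmem π hπ)
  · intro σ _
    exact resPerm_ext σ _
  · intro π hπ
    have h2 := inversions_extPerm (resPerm π (hmem π hπ))
    rw [ext_resPerm] at h2
    exact congrArg (fun t => θ ^ t) h2

lemma Fw_step (θ : ℝ) (n j : ℕ) (h1 : j < n + 1) (h2 : j + 1 < n + 1) :
    Fw θ n ⟨j, h1⟩ = θ * Fw θ n ⟨j+1, h2⟩ := by
  classical
  set a : Fin (n+1) := ⟨j, h1⟩ with ha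
  set b : Fin (n+1) := ⟨j+1, h2⟩ with hb
  have hab : (a:ℕ)+1 = (b:ℕ) := rfl
  have habne : a ≠ b := fun h => absurd (congrArg Fin.val h) (by simp [ha, hb])
  rw [Fw, Fw, Finset.mul_sum]
  rw [← Equiv.sum_comp (Equiv.mulRight (Equiv.swap a b))
      (fun π : Equiv.Perm (Fin (n+1)) => if π.symm (Fin.last n) = a then θ ^ inversions π else 0)]
  apply Finset.sum_congr rfl
  intro π _
  show (if (π * Equiv.swap a b).symm (Fin.last n) = a
      then θ ^ inversions (π * Equiv.swap a b) else 0)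
      = θ * (if π.symm (Fin.last n) = b then θ ^ inversions π else 0)
  have hsymm : (π * Equiv.swap a b).symm (Fin.last n)
      = Equiv.swap a b (π.symm (Fin.last n)) := by
    show ((Equiv.swap a b).trans π).symm (Fin.last n) = _
    rw [Equiv.symm_trans_apply, Equiv.symm_swap]
  rw [hsymm]
  have hiff : Equiv.swap a b (π.symm (Fin.last n)) = a ↔ π.symm (Fin.last n) = b := by
    constructor
    · intro h
      have := congrArg (Equiv.swap a b) h
      rwa [Equiv.swap_apply_self, Equiv.swap_apply_left] at this
    · intro h
      rw [h, Equiv.swap_apply_right]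
  by_cases hc : π.symm (Fin.last n) = b
  · rw [if_pos (hiff.2 hc), if_pos hc]
    have hπb : π b = Fin.last n := by rw [← hc, Equiv.apply_symm_apply]
    have hlt : π a < π b := by
      rw [hπb]
      refine lt_of_le_of_ne (Fin.le_last _) ?_
      intro he
      exact habne (π.injective (by rw [he, hπb]))
    rw [inversions_mul_swap_adj π a b hab hlt, pow_succ]
    ring
  · rw [if_neg (fun h => hc (hiff.1 h)), if_neg hc, mul_zero]

lemma Fw_eq (θ : ℝ) (n : ℕ) :
    ∀ (d j : ℕ) (hjd : j + d = n), Fw θ n ⟨j, by omega⟩ = θ^d * Sw θ n := by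
  intro d
  induction d with
  | zero =>
    intro j hj
    have he : (⟨j, by omega⟩ : Fin (n+1)) = Fin.last n := Fin.ext (by simp; omega)
    rw [he, Fw_last]
    simp
  | succ d ih =>
    intro j hj
    rw [Fw_step θ n j (by omega) (by omega), ih (j+1) (by omega), pow_succ]
    ring

lemma Sw_zero (θ : ℝ) : Sw θ 0 = 1 := by
  simp [Sw, inversions]

lemma Sw_succ (θ : ℝ) (n : ℕ) : Sw θ (n+1) = mallowsP θ (n+1) * Sw θ n := by
  classical
  have h1 : Sw θ (n+1) = ∑ j : Fin (n+1), Fw θ n j := by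
    rw [Sw]
    unfold Fw
    rw [Finset.sum_comm]
    apply Finset.sum_congr rfl
    intro π _
    simp
  rw [h1]
  have h2 : ∀ j : Fin (n+1), Fw θ n j = θ^(n - (j:ℕ)) * Sw θ n := by
    intro j
    have := Fw_eq θ n (n - (j:ℕ)) (j:ℕ) (by omega)
    simpa using this
  rw [Finset.sum_congr rfl (fun j _ => h2 j), ← Finset.sum_mul]
  congr 1
  rw [mallowsP]
  rw [Fin.sum_univ_eq_sum_range (fun j => θ^(n - j)) (n+1)]
  rw [← Finset.sum_range_reflect (fun i => θ ^ i) (n+1)]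
  apply Finset.sum_congr rfl
  intro i hi
  rw [Finset.mem_range] at hi
  have he : n + 1 - 1 - i = n - i := by omega
  rw [he]

lemma Sw_eq (θ : ℝ) (m : ℕ) : Sw θ m = mallowsPFact θ m := by
  induction m with
  | zero => rw [Sw_zero, mallowsPFact]; simp
  | succ n ih => rw [Sw_succ, ih, mallowsPFact, mallowsPFact, Finset.prod_range_succ]; ring

lemma selList_single {N : ℕ} (π : Equiv.Perm (Fin N)) (k lo : ℕ) :
    selList π [k] lo = (if h : (Finset.univ.filter
      (fun p : Fin N => max k lo ≤ (p : ℕ) ∧ ∀ q : Fin N, q < p → π q < π p)).Nonempty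
      then [(Finset.univ.filter
        (fun p : Fin N => max k lo ≤ (p : ℕ) ∧ ∀ q : Fin N, q < p → π q < π p)).min' h]
      else []) := by
  rw [selList]
  simp only [selList]

lemma nil_iff (n k : ℕ) (π : Equiv.Perm (Fin (n+1))) :
    selList π [k] 0 = [] ↔ ((π.symm (Fin.last n) : ℕ) < k) := by
  classical
  rw [selList_single]
  set S : Finset (Fin (n+1)) := Finset.univ.filter
      (fun p : Fin (n+1) => max k 0 ≤ (p : ℕ) ∧ ∀ q : Fin (n+1), q < p → π q < π p) with hS
  constructor
  · intro h
    by_contra hlt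
    push_neg at hlt
    have hmem : π.symm (Fin.last n) ∈ S := by
      rw [hS, Finset.mem_filter]
      refine ⟨Finset.mem_univ _, by simpa using hlt, ?_⟩
      intro q hq
      have hne : π q ≠ Fin.last n := by
        intro he
        have hq' : q = π.symm (Fin.last n) := by rw [← he, Equiv.symm_apply_apply]
        rw [hq'] at hq
        exact lt_irrefl _ hq
      rw [Equiv.apply_symm_apply]
      exact lt_of_le_of_ne (Fin.le_last _) hne
    rw [dif_pos ⟨_, hmem⟩] at h
    exact absurd h (by simp)
  · intro hlt
    rw [dif_neg]
    rintro ⟨p, hp⟩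
    rw [hS, Finset.mem_filter] at hp
    obtain ⟨-, hk, hmax⟩ := hp
    have hple : p ≤ π.symm (Fin.last n) := by
      by_contra hgt
      push_neg at hgt
      have := hmax _ hgt
      rw [Equiv.apply_symm_apply] at this
      exact absurd this (not_lt.2 (Fin.le_last _))
    have h1 : k ≤ (p:ℕ) := le_trans (le_max_left _ _) hk
    have h2 : (p:ℕ) ≤ (π.symm (Fin.last n) : ℕ) := hple
    omega


theorem stmt6 (θ : ℝ) (m : ℕ) (hm : 1 ≤ m) :
    (∀ k : ℕ, 1 ≤ k → k ≤ m →
      Tle θ m [k] 0 = (∑ i ∈ Finset.Ico (m - k) m, θ ^ i) * mallowsPFact θ (m - 1) ∧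
      Tle θ m [k] 0 = θ ^ (m - k) * mallowsP θ k * mallowsPFact θ (m - 1)) ∧
    Tle θ m [0] 0 = 0 := by
  classical
  obtain ⟨n, rfl⟩ : ∃ n, m = n + 1 := ⟨m - 1, by omega⟩
  constructor
  · intro k hk1 hk2
    have stepA : Tle θ (n+1) [k] 0
        = ∑ π : Equiv.Perm (Fin (n+1)),
            if ((π.symm (Fin.last n) : ℕ) < k) then θ ^ inversions π else 0 := by
      rw [Tle]
      apply Finset.sum_congr rfl
      intro π _
      have hiff : (((selList π [k] 0).length : ℤ) ≤ 0) ↔ ((π.symm (Fin.last n) : ℕ) < k) := by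
        rw [← nil_iff n k π, ← List.length_eq_zero_iff]
        omega
      exact if_congr hiff rfl rfl
    have stepB : (∑ π : Equiv.Perm (Fin (n+1)),
          if ((π.symm (Fin.last n) : ℕ) < k) then θ ^ inversions π else 0)
        = ∑ j : Fin (n+1), (if (j:ℕ) < k then Fw θ n j else 0) := by
      have hrhs : ∀ j : Fin (n+1), (if (j:ℕ) < k then Fw θ n j else 0)
          = ∑ π : Equiv.Perm (Fin (n+1)),
              (if ((j:ℕ) < k ∧ π.symm (Fin.last n) = j) then θ ^ inversions π else 0) := by
        intro j
        by_cases hj : (j:ℕ) < k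
        · rw [if_pos hj, Fw]
          apply Finset.sum_congr rfl
          intro π _
          exact if_congr (and_iff_right hj).symm rfl rfl
        · rw [if_neg hj]
          symm
          apply Finset.sum_eq_zero
          intro π _
          rw [if_neg (fun h => hj h.1)]
      rw [Finset.sum_congr rfl (fun j _ => hrhs j), Finset.sum_comm]
      apply Finset.sum_congr rfl
      intro π _
      rw [Finset.sum_eq_single (π.symm (Fin.last n))]
      · by_cases hc : (π.symm (Fin.last n) : ℕ) < k
        · rw [if_pos hc, if_pos ⟨hc, rfl⟩]
        · rw [if_neg hc, if_neg (fun h => hc h.1)]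
      · intro j _ hne
        rw [if_neg (fun h => hne h.2.symm)]
      · intro h
        exact absurd (Finset.mem_univ _) h
    have stepC : (∑ j : Fin (n+1), (if (j:ℕ) < k then Fw θ n j else 0))
        = (∑ j ∈ Finset.range k, θ ^ (n - j)) * Sw θ n := by
      have h2 : ∀ j : Fin (n+1), Fw θ n j = θ^(n - (j:ℕ)) * Sw θ n := by
        intro j
        have := Fw_eq θ n (n - (j:ℕ)) (j:ℕ) (by omega)
        simpa using this
      calc (∑ j : Fin (n+1), (if (j:ℕ) < k then Fw θ n j else 0))
          = ∑ j : Fin (n+1), (if (j:ℕ) < k then θ^(n - (j:ℕ)) * Sw θ n else 0) := by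
            apply Finset.sum_congr rfl
            intro j _
            rw [h2 j]
        _ = ∑ j ∈ Finset.range (n+1), (if j < k then θ^(n - j) * Sw θ n else 0) := by
            rw [Fin.sum_univ_eq_sum_range (fun j => if j < k then θ^(n - j) * Sw θ n else 0) (n+1)]
        _ = ∑ j ∈ Finset.range k, (if j < k then θ^(n - j) * Sw θ n else 0) := by
            symm
            apply Finset.sum_subset (Finset.range_subset_range.2 (show k ≤ n+1 by omega))
            intro x _ hx
            rw [Finset.mem_range] at hx
            rw [if_neg hx]
        _ = ∑ j ∈ Finset.range k, θ^(n - j) * Sw θ n := by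
            apply Finset.sum_congr rfl
            intro j hj
            rw [Finset.mem_range] at hj
            rw [if_pos hj]
        _ = (∑ j ∈ Finset.range k, θ ^ (n - j)) * Sw θ n := by
            rw [Finset.sum_mul]
    have stepD : (∑ j ∈ Finset.range k, θ ^ (n - j))
        = ∑ i ∈ Finset.Ico (n + 1 - k) (n + 1), θ ^ i := by
      refine Finset.sum_nbij' (i := fun j => n - j) (j := fun i => n - i) ?_ ?_ ?_ ?_ ?_
      · intro a ha
        rw [Finset.mem_range] at ha
        rw [Finset.mem_Ico]
        omega
      · intro a ha
        rw [Finset.mem_Ico] at ha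
        rw [Finset.mem_range]
        omega
      · intro a ha
        rw [Finset.mem_range] at ha
        omega
      · intro a ha
        rw [Finset.mem_Ico] at ha
        omega
      · intro a ha
        rfl
    have hfirst : Tle θ (n+1) [k] 0
        = (∑ i ∈ Finset.Ico (n + 1 - k) (n + 1), θ ^ i) * mallowsPFact θ (n + 1 - 1) := by
      rw [stepA, stepB, stepC, stepD, Sw_eq]
      norm_num
    refine ⟨hfirst, ?_⟩
    rw [hfirst]
    have hsum : (∑ i ∈ Finset.Ico (n + 1 - k) (n + 1), θ ^ i)
        = θ ^ (n + 1 - k) * mallowsP θ k := by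
      rw [Finset.sum_Ico_eq_sum_range]
      have he : n + 1 - (n + 1 - k) = k := by omega
      rw [he, mallowsP, Finset.mul_sum]
      apply Finset.sum_congr rfl
      intro i _
      rw [pow_add]
    rw [hsum]
  · rw [Tle]
    apply Finset.sum_eq_zero
    intro π _
    rw [if_neg]
    intro h
    have hlen : (selList π [0] 0).length = 0 := by omega
    rw [List.length_eq_zero_iff, nil_iff] at hlen
    omega
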